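/- (Theorem 1, main error bound.) Let Q ⊆ ℝ^d be a compact convex set, M ⊆ Q a finite set, f : Q → ℝ a convex function that is Lipschitz with constant L, f_n : Q → ℝ a function, ε ≥ 0 and δ > 0. Assume (i) |f_n(m) − f(m)| ≤ ε for all m ∈ M, and (ii) every x ∈ Q is a convex combination of points of M each at distance at most δ from x. Then the convex estimator f̂(x) = sup{ψ(x) : ψ convex on Q, ψ ≤ f_n on M} satisfies, for all x ∈ Q, −ε ≤ f̂(x) − f(x) ≤ ε + Lδ. -/

import Mathlib

open Set

/-- The convex estimator associated with a function `g` and a finite set `M ⊆ Q`: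
`x ↦ sup {ψ x : ψ convex on Q, ψ ≤ g on M}`. -/
noncomputable def convEst {d : ℕ} (Q : Set (EuclideanSpace ℝ (Fin d)))
    (M : Finset (EuclideanSpace ℝ (Fin d))) (g : EuclideanSpace ℝ (Fin d) → ℝ)
    (x : EuclideanSpace ℝ (Fin d)) : ℝ :=
  sSup {y : ℝ | ∃ ψ : EuclideanSpace ℝ (Fin d) → ℝ,
    ConvexOn ℝ Q ψ ∧ (∀ m ∈ M, ψ m ≤ g m) ∧ y = ψ x}

/-- Theorem 1, main error bound: if `|f_n - f| ≤ ε` on `M` and every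
`x ∈ Q` is a convex combination of points of `M` within distance `δ` of `x`, then
`-ε ≤ f̂ x - f x ≤ ε + L δ` for all `x ∈ Q`. -/
theorem convEst_error_bound {d : ℕ} (Q : Set (EuclideanSpace ℝ (Fin d)))
    (hQc : IsCompact Q) (hQconv : Convex ℝ Q)
    (M : Finset (EuclideanSpace ℝ (Fin d)))
    (hMQ : (M : Set (EuclideanSpace ℝ (Fin d))) ⊆ Q)
    (f fn : EuclideanSpace ℝ (Fin d) → ℝ) (hfconv : ConvexOn ℝ Q f)
    (L : ℝ) (hL : 0 ≤ L)
    (hLip : ∀ y ∈ Q, ∀ z ∈ Q, |f y - f z| ≤ L * dist y z)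
    (ε : ℝ) (hε : 0 ≤ ε) (δ : ℝ) (hδ : 0 < δ)
    (herr : ∀ m ∈ M, |fn m - f m| ≤ ε)
    (hgrid : ∀ x ∈ Q,
      x ∈ convexHull ℝ {m : EuclideanSpace ℝ (Fin d) | m ∈ M ∧ dist x m ≤ δ}) :
    ∀ x ∈ Q, -ε ≤ convEst Q M fn x - f x ∧ convEst Q M fn x - f x ≤ ε + L * δ := by
  intro x hx
  set S : Set (EuclideanSpace ℝ (Fin d)) := {m | m ∈ M ∧ dist x m ≤ δ} with hS
  have hSQ : S ⊆ Q := fun m hm => hMQ hm.1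
  have hhullQ : convexHull ℝ S ⊆ Q := convexHull_min hSQ hQconv
  -- every element of the sup-set is ≤ f x + (ε + L δ)
  have key : ∀ y ∈ {y : ℝ | ∃ ψ : EuclideanSpace ℝ (Fin d) → ℝ,
      ConvexOn ℝ Q ψ ∧ (∀ m ∈ M, ψ m ≤ fn m) ∧ y = ψ x},
      y ≤ f x + (ε + L * δ) := by
    rintro y ⟨ψ, hψconv, hψle, rfl⟩
    obtain ⟨m, hmS, hle⟩ := hψconv.exists_ge_of_mem_convexHull hSQ (hgrid x hx)
    have hmQ : m ∈ Q := hMQ hmS.1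
    have h1 : ψ m ≤ fn m := hψle m hmS.1
    have h2 : fn m ≤ f m + ε := by
      have := herr m hmS.1
      linarith [abs_le.mp this]
    have h3 : f m - f x ≤ L * δ := by
      have := hLip m hmQ x hx
      have hd : L * dist m x ≤ L * δ := by
        rw [dist_comm]
        exact mul_le_mul_of_nonneg_left hmS.2 hL
      linarith [abs_le.mp this]
    linarith
  have hbdd : BddAbove {y : ℝ | ∃ ψ : EuclideanSpace ℝ (Fin d) → ℝ,
      ConvexOn ℝ Q ψ ∧ (∀ m ∈ M, ψ m ≤ fn m) ∧ y = ψ x} := ⟨f x + (ε + L * δ), key⟩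
  have hmem : f x - ε ∈ {y : ℝ | ∃ ψ : EuclideanSpace ℝ (Fin d) → ℝ,
      ConvexOn ℝ Q ψ ∧ (∀ m ∈ M, ψ m ≤ fn m) ∧ y = ψ x} := by
    refine ⟨fun z => f z - ε, ?_, ?_, rfl⟩
    · simpa [sub_eq_add_neg, Pi.add_def] using hfconv.add_const (-ε)
    · intro m hm
      have := herr m hm
      simp only
      linarith [abs_le.mp this]
  constructor
  · have := le_csSup hbdd hmem
    unfold convEst
    linarith
  · have := csSup_le ⟨f x - ε, hmem⟩ key
    unfold convEst
    linarith
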